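/- Let C be symmetric positive definite and V symmetric with I + L_C[V] symmetric positive definite. Then Exp_C(V) := (L_C[V] + I) C (L_C[V] + I) is symmetric positive definite, and Exp_C(V) = C + V + L_C[V] C L_C[V]. -/

import Mathlib

open Matrix

/-- if `X = L_C[V]` and `I + X` is positive definite, then
`Exp_C(V) = (X + I) C (X + I)` is positive definite and equals `C + V + X C X`. -/
theorem riemannian_exp_posDef {n : ℕ} {C V X : Matrix (Fin n) (Fin n) ℝ}
    (hC : C.PosDef) (hV : V.IsSymm) (hX : X.IsSymm) (hXeq : X * C + C * X = V)
    (hpos : ((1 : Matrix (Fin n) (Fin n) ℝ) + X).PosDef) :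
    ((X + 1) * C * (X + 1)).PosDef ∧ (X + 1) * C * (X + 1) = C + V + X * C * X := by
  have hA : (X + 1 : Matrix (Fin n) (Fin n) ℝ).PosDef := by rwa [add_comm] at hpos
  have hXs : (X + 1 : Matrix (Fin n) (Fin n) ℝ).IsHermitian := hA.isHermitian
  constructor
  · refine posDef_iff_dotProduct_mulVec.mpr ⟨?_, fun x hx => ?_⟩
    · have := hC.isHermitian
      unfold Matrix.IsHermitian at *
      rw [conjTranspose_mul, conjTranspose_mul, hXs, this, mul_assoc]
    · have hinv : Function.Injective ((X + 1 : Matrix (Fin n) (Fin n) ℝ).mulVec) :=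
        mulVec_injective_iff_isUnit.2 hA.isUnit
      have hy : (X + 1) *ᵥ x ≠ 0 := fun h => hx (hinv (by simpa using h))
      have key := hC.dotProduct_mulVec_pos hy
      have hsym : star ((X+1) *ᵥ x) = star x ᵥ* (X + 1) := by
        have h2 : ((X+1) : Matrix (Fin n) (Fin n) ℝ)ᵀ = X + 1 := by
          rw [transpose_add, transpose_one, hX]
        rw [star_trivial, star_trivial, show x ᵥ* (X+1) = (X+1)ᵀ *ᵥ x from
          (mulVec_transpose _ x).symm, h2]
      calc (0:ℝ) < star ((X+1) *ᵥ x) ⬝ᵥ (C *ᵥ ((X+1) *ᵥ x)) := key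
        _ = star x ⬝ᵥ ((X + 1) * C * (X + 1)) *ᵥ x := by
            have h2 : ((X+1) : Matrix (Fin n) (Fin n) ℝ)ᵀ = X + 1 := by
              rw [transpose_add, transpose_one, hX]
            have hcomm : (X+1) *ᵥ x = x ᵥ* (X+1) := by
              rw [show x ᵥ* (X+1) = (X+1)ᵀ *ᵥ x from (mulVec_transpose _ x).symm, h2]
            rw [hsym, mulVec_mulVec, Matrix.dotProduct_mulVec, vecMul_vecMul, ← mul_assoc,
              ← Matrix.dotProduct_mulVec]
  · have h1 : (X + 1) * C * (X + 1) = X*C*X + (X*C + C*X) + C := by noncomm_ring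
    rw [h1, hXeq]; abel
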